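/- Let k ≥ 2, n = 4k+7, m = 2k+3 and A_m = B_1 ∪ ... ∪ B_10 as above. Then A_m is maximal among intersecting families of m-element subsets of [n]: for every m-element subset S of [n] with S ∉ A_m, there exists S₁ ∈ A_m with S ∩ S₁ = ∅. -/

import Mathlib

def fanoShift (k : ℕ) : Finset (Finset ℕ) :=
  { {4*k+1, 4*k+2, 4*k+5}, {4*k+1, 4*k+3, 4*k+6}, {4*k+1, 4*k+4, 4*k+7},
    {4*k+2, 4*k+3, 4*k+7}, {4*k+3, 4*k+4, 4*k+5}, {4*k+5, 4*k+6, 4*k+7},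
    {4*k+2, 4*k+4, 4*k+6} }

/-- The Fano-based family `A_m = B₁ ∪ ⋯ ∪ B₁₀` of `(2k+3)`-subsets of `[4k+7]`. -/
def Am (k : ℕ) : Set (Finset ℕ) :=
  {S | (∃ T ∈ fanoShift k, ∃ S' : Finset ℕ,
          S' ⊆ Finset.Icc 1 (4*k) ∧ S'.card = 2*k ∧ S = T ∪ S')
    ∨ (∃ S' S'' : Finset ℕ, S' ⊆ Finset.Icc (4*k+1) (4*k+7) ∧ S'.card = 2 ∧
          S'' ⊆ Finset.Icc 1 (4*k) ∧ S''.card = 2*k+1 ∧ S = S' ∪ S'')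
    ∨ (∃ S' S'' : Finset ℕ, S' ⊆ Finset.Icc (4*k+1) (4*k+7) ∧ S'.card = 1 ∧
          S'' ⊆ Finset.Icc 1 (4*k) ∧ S''.card = 2*k+2 ∧ S = S' ∪ S'')
    ∨ (S ⊆ Finset.Icc 1 (4*k) ∧ S.card = 2*k+3)}

lemma fano_fact : ∀ A ∈ (Finset.Icc 1 7).powerset, A.card = 3 → A ∉ fanoShift 0 →
    ∃ T ∈ fanoShift 0, T ⊆ Finset.Icc 1 7 \ A := by
  set_option maxRecDepth 10000 in decide

lemma fanoShift_eq (k : ℕ) :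
    fanoShift k = (fanoShift 0).image (Finset.image (fun j => 4*k + j)) := by
  simp [fanoShift, Finset.image_insert, Finset.image_singleton]

theorem Am_maximal (k : ℕ) (hk : 2 ≤ k) :
    ∀ S : Finset ℕ, S ⊆ Finset.Icc 1 (4*k+7) → S.card = 2*k+3 → S ∉ Am k →
      ∃ S₁ ∈ Am k, S ∩ S₁ = ∅ := by
  intro S hS hcard hnot
  set A := S ∩ Finset.Icc (4*k+1) (4*k+7) with hAdef
  set B := S ∩ Finset.Icc 1 (4*k) with hBdef
  have hAsub : A ⊆ Finset.Icc (4*k+1) (4*k+7) := Finset.inter_subset_right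
  have hBsub : B ⊆ Finset.Icc 1 (4*k) := Finset.inter_subset_right
  have hunion : S = A ∪ B := by
    ext x
    rw [Finset.mem_union, hAdef, hBdef, Finset.mem_inter, Finset.mem_inter,
      Finset.mem_Icc, Finset.mem_Icc]
    constructor
    · intro hx
      have h := Finset.mem_Icc.mp (hS hx)
      by_cases hc : x ≤ 4*k
      · exact Or.inr ⟨hx, by omega⟩
      · exact Or.inl ⟨hx, by omega⟩
    · rintro (⟨h, _⟩ | ⟨h, _⟩) <;> exact h
  have hdis : Disjoint A B := by
    rw [Finset.disjoint_left]
    intro x hx hy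
    have h1 := Finset.mem_Icc.mp (hAsub hx)
    have h2 := Finset.mem_Icc.mp (hBsub hy)
    omega
  have hcardAB : A.card + B.card = 2*k+3 := by
    rw [← Finset.card_union_of_disjoint hdis, ← hunion, hcard]
  have hA7 : A.card ≤ 7 := by
    have := Finset.card_le_card hAsub
    simpa [Nat.card_Icc] using this
  have hB4k : B.card ≤ 4*k := by
    have := Finset.card_le_card hBsub
    simpa [Nat.card_Icc] using this
  -- S ∉ Am forces A.card ≥ 3
  have h3 : 3 ≤ A.card := by
    by_contra h
    push_neg at h
    apply hnot
    interval_cases hc : A.card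
    · have hAe : A = ∅ := Finset.card_eq_zero.mp hc
      refine Or.inr (Or.inr (Or.inr ⟨?_, hcard⟩))
      rw [hunion, hAe, Finset.empty_union]; exact hBsub
    · exact Or.inr (Or.inr (Or.inl ⟨A, B, hAsub, hc, hBsub, by omega, hunion⟩))
    · exact Or.inr (Or.inl ⟨A, B, hAsub, hc, hBsub, by omega, hunion⟩)
  set C := Finset.Icc 1 (4*k) \ B with hCdef
  have hCsub : C ⊆ Finset.Icc 1 (4*k) := Finset.sdiff_subset
  have hCcard : C.card = 4*k - B.card := by
    rw [hCdef, Finset.card_sdiff_of_subset hBsub, Nat.card_Icc]; omega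
  -- generic: members of C are not in S
  have hCS : ∀ x ∈ S, x ∉ C := by
    intro x hxS hxC
    rw [hCdef, Finset.mem_sdiff] at hxC
    exact hxC.2 (Finset.mem_inter.mpr ⟨hxS, hxC.1⟩)
  rcases eq_or_lt_of_le h3 with h3' | h4
  · -- A.card = 3 and A is not a Fano line
    have hAnot : A ∉ fanoShift k := fun hmem =>
      hnot (Or.inl ⟨A, hmem, B, hBsub, by omega, hunion⟩)
    set A' := A.image (fun x => x - 4*k) with hA'def
    have hA'sub : A' ⊆ Finset.Icc 1 7 := by
      intro y hy
      obtain ⟨x, hx, rfl⟩ := Finset.mem_image.mp hy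
      have := Finset.mem_Icc.mp (hAsub hx)
      rw [Finset.mem_Icc]; omega
    have hA'card : A'.card = 3 := by
      rw [hA'def, Finset.card_image_of_injOn, ← h3']
      intro x hx y hy hxy
      have h1 := Finset.mem_Icc.mp (hAsub hx)
      have h2 := Finset.mem_Icc.mp (hAsub hy)
      simp only at hxy
      omega
    have hback : A = A'.image (fun j => 4*k + j) := by
      rw [hA'def, Finset.image_image]
      have : Set.EqOn ((fun j => 4*k + j) ∘ fun x => x - 4*k) id ↑A := by
        intro x hx
        have := Finset.mem_Icc.mp (hAsub hx)
        simp only [Function.comp, id]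
        omega
      rw [Finset.image_congr this, Finset.image_id]
    have hA'not : A' ∉ fanoShift 0 := by
      intro h
      apply hAnot
      rw [fanoShift_eq k, hback]
      exact Finset.mem_image_of_mem _ h
    obtain ⟨T₀, hT₀, hT₀sub⟩ := fano_fact A' (Finset.mem_powerset.mpr hA'sub) hA'card hA'not
    set T := T₀.image (fun j => 4*k + j) with hTdef
    have hT : T ∈ fanoShift k := by
      rw [fanoShift_eq k]; exact Finset.mem_image_of_mem _ hT₀
    refine ⟨T ∪ C, Or.inl ⟨T, hT, C, hCsub, by omega, rfl⟩, ?_⟩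
    rw [Finset.eq_empty_iff_forall_notMem]
    intro x hx
    rw [Finset.mem_inter, Finset.mem_union] at hx
    obtain ⟨hxS, hxT | hxC⟩ := hx
    · obtain ⟨j, hjT₀, rfl⟩ := Finset.mem_image.mp hxT
      have hj := hT₀sub hjT₀
      rw [Finset.mem_sdiff, Finset.mem_Icc] at hj
      have hxA : (4*k+j) ∈ A :=
        Finset.mem_inter.mpr ⟨hxS, Finset.mem_Icc.mpr (by omega)⟩
      have : j ∈ A' := by
        rw [hA'def]
        exact Finset.mem_image.mpr ⟨4*k+j, hxA, by omega⟩
      exact hj.2 this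
    · exact hCS x hxS hxC
  · -- A.card ≥ 4
    set D := Finset.Icc (4*k+1) (4*k+7) \ A with hDdef
    have hDsub : D ⊆ Finset.Icc (4*k+1) (4*k+7) := Finset.sdiff_subset
    have hDcard : D.card = 7 - A.card := by
      rw [hDdef, Finset.card_sdiff_of_subset hAsub, Nat.card_Icc]
      omega
    have hDS : ∀ x ∈ S, x ∉ D := by
      intro x hxS hxD
      rw [hDdef, Finset.mem_sdiff] at hxD
      exact hxD.2 (Finset.mem_inter.mpr ⟨hxS, hxD.1⟩)
    have hdisj : ∀ E F : Finset ℕ, E ⊆ D → F ⊆ C → S ∩ (E ∪ F) = ∅ := by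
      intro E F hE hF
      rw [Finset.eq_empty_iff_forall_notMem]
      intro x hx
      rw [Finset.mem_inter, Finset.mem_union] at hx
      obtain ⟨hxS, hxE | hxF⟩ := hx
      · exact hDS x hxS (hE hxE)
      · exact hCS x hxS (hF hxF)
    rcases le_or_gt A.card 5 with h5 | h6
    · obtain ⟨E, hED, hE2⟩ := Finset.exists_subset_card_eq (s := D) (n := 2) (by omega)
      obtain ⟨F, hFC, hFc⟩ := Finset.exists_subset_card_eq (s := C) (n := (2*k+1)) (by omega)
      exact ⟨E ∪ F,
        Or.inr (Or.inl ⟨E, F, hED.trans hDsub, hE2, hFC.trans hCsub, hFc, rfl⟩),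
        hdisj E F hED hFC⟩
    rcases le_or_gt A.card 6 with h6' | h7
    · obtain ⟨E, hED, hE1⟩ := Finset.exists_subset_card_eq (s := D) (n := 1) (by omega)
      obtain ⟨F, hFC, hFc⟩ := Finset.exists_subset_card_eq (s := C) (n := (2*k+2)) (by omega)
      exact ⟨E ∪ F,
        Or.inr (Or.inr (Or.inl ⟨E, F, hED.trans hDsub, hE1, hFC.trans hCsub, hFc, rfl⟩)),
        hdisj E F hED hFC⟩
    · obtain ⟨F, hFC, hFc⟩ := Finset.exists_subset_card_eq (s := C) (n := (2*k+3)) (by omega)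
      refine ⟨F, Or.inr (Or.inr (Or.inr ⟨hFC.trans hCsub, hFc⟩)), ?_⟩
      have := hdisj ∅ F (Finset.empty_subset _) hFC
      rwa [Finset.empty_union] at this
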